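/- arXiv:2005.08181 — 2 statements merged into one kernel-verified Lean document; each statement's English description precedes it below -/
import Mathlib

section
/- For every configuration W ⊆ K^E there exists F ⊆ E with |F| = dim_K (π_F(W))^{⋆2} = dim_K W^{⋆2} such that ψ_W is linearly contact equivalent to ψ_{π_F(W)}. In particular, ψ_W is equivalent to a polynomial in at most dim_K W^{⋆2} ≤ binomial(dim W + 1, 2) variables. -/
open MvPolynomial

/-- The `s`-fold Hadamard power of a subspace. -/
noncomputable def hadPow {K : Type*} [Field K] {ι : Type*}
    (W : Submodule K (ι → K)) (s : ℕ) : Submodule K (ι → K) :=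
  Submodule.span K {v | ∃ w : Fin s → (ι → K), (∀ i, w i ∈ W) ∧ v = ∏ i, w i}

/-- The coordinate projection `π_F : K^E → K^F` for `F ⊆ E`. -/
noncomputable def projF {K : Type*} [Field K] {E : Type*} (F : Set E) :
    (E → K) →ₗ[K] (F → K) :=
  LinearMap.funLeft K K (Subtype.val : F → E)

/-- The configuration polynomial `ψ_w = det((Σ_e x_e w^i_e w^j_e)_{i,j})`. -/
noncomputable def configPoly {K : Type*} [Field K] {ι : Type*} [Fintype ι] {r : ℕ}
    (w : Fin r → ι → K) : MvPolynomial ι K :=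
  Matrix.det (Matrix.of fun i j : Fin r => ∑ e, MvPolynomial.X e * MvPolynomial.C (w i e * w j e))

/-- Linear contact equivalence of polynomials. -/
def ContactEquiv {K : Type*} [Field K] {σ τ : Type*} [Fintype σ] [Fintype τ]
    (φ : MvPolynomial σ K) (ψ : MvPolynomial τ K) : Prop :=
  ∃ (p : ℕ) (f : σ ↪ Fin p) (g : τ ↪ Fin p) (lam : Kˣ) (M : Matrix (Fin p) (Fin p) K),
    IsUnit M.det ∧
    MvPolynomial.rename f φ =
      (lam : K) • MvPolynomial.aeval
        (fun i => ∑ j, MvPolynomial.C (M i j) * MvPolynomial.X j)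
        (MvPolynomial.rename g ψ)

open Module Submodule Pointwise

section Aux

variable {K : Type*} [Field K]

lemma hadPow_two_eq_mul {ι : Type*} (W : Submodule K (ι → K)) :
    hadPow W 2 = W * W := by
  rw [hadPow, Submodule.mul_def]
  congr 1
  ext v
  simp only [Set.mem_setOf_eq, Set.mem_mul, SetLike.mem_coe]
  constructor
  · rintro ⟨u, hu, rfl⟩
    exact ⟨u 0, hu 0, u 1, hu 1, (Fin.prod_univ_two u).symm⟩
  · rintro ⟨a, ha, b, hb, rfl⟩
    exact ⟨![a, b], by simp [Fin.forall_fin_two, ha, hb], by simp [Fin.prod_univ_two]⟩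

lemma finrank_hadPow_two_le {ι : Type*} {r : ℕ} (w : Fin r → ι → K) :
    finrank K (hadPow (span K (Set.range w)) 2) ≤ (r + 1).choose 2 := by
  rw [hadPow_two_eq_mul, Submodule.span_mul_span]
  have hq : Set.range w * Set.range w =
      Set.range (Sym2.lift ⟨fun i j => w i * w j, fun i j => mul_comm (w i) (w j)⟩) := by
    ext v
    simp only [Set.mem_mul, Set.mem_range]
    constructor
    · rintro ⟨a, ⟨i, rfl⟩, b, ⟨j, rfl⟩, rfl⟩
      exact ⟨s(i, j), rfl⟩
    · rintro ⟨q, rfl⟩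
      induction q using Sym2.ind with
      | _ i j => exact ⟨w i, ⟨i, rfl⟩, w j, ⟨j, rfl⟩, rfl⟩
  rw [hq]
  calc finrank K (span K _) ≤ Fintype.card (Sym2 (Fin r)) := finrank_range_le_card _
    _ = (r + 1).choose 2 := by rw [Sym2.card, Fintype.card_fin]

lemma hadPow_map {E : Type*} (F : Set E) (W : Submodule K (E → K)) :
    hadPow (W.map (projF F)) 2 = (hadPow W 2).map (projF F) := by
  have hpa : projF (K := K) F =
      (AlgHom.mk' (Pi.ringHom (fun f : F => Pi.evalRingHom (fun _ : E => K) f.val))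
        (fun c x => rfl)).toLinearMap := by
    apply LinearMap.ext; intro x; rfl
  rw [hadPow_two_eq_mul, hadPow_two_eq_mul, hpa, Submodule.map_mul]

variable {E : Type*} [Fintype E] [DecidableEq E]

lemma exists_good_finset (V : Submodule K (E → K)) :
    ∃ (F : Finset E) (b : Basis ↥(F : Set E) K (Module.Dual K V)),
      F.card = finrank K V ∧
      ∀ f : ↥(F : Set E), b f = (LinearMap.proj (f : E) ∘ₗ V.subtype) := by
  classical
  set φ : E → Module.Dual K V := fun e => (LinearMap.proj e ∘ₗ V.subtype) with hφ
  have hspan : Submodule.span K (Set.range φ) = ⊤ := by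
    apply Submodule.eq_top_of_finrank_eq
    have h1 := Subspace.finrank_add_finrank_dualCoannihilator_eq (span K (Set.range φ))
    have h2 : (span K (Set.range φ)).dualCoannihilator = ⊥ := by
      rw [eq_bot_iff]
      intro v hv
      rw [Submodule.mem_dualCoannihilator] at hv
      have : ∀ e, (v : E → K) e = 0 := fun e => hv (φ e) (subset_span ⟨e, rfl⟩)
      simpa [Submodule.mem_bot] using Subtype.ext (funext this)
    rw [h2, finrank_bot, add_zero] at h1
    rw [h1, Subspace.dual_finrank_eq]
  obtain ⟨s, hs_sub, hs_span, hs_ind⟩ := exists_linearIndependent K (Set.range φ)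
  rw [hspan] at hs_span
  have hsfin : s.Finite := hs_ind.setFinite
  haveI : Fintype s := hsfin.fintype
  have hb : Basis ↥s K (Module.Dual K V) :=
    Basis.mk hs_ind (by rw [Subtype.range_coe, hs_span])
  have hch : ∀ x : s, ∃ e : E, φ e = (x : Module.Dual K V) := fun x => hs_sub x.2
  choose ch hch' using hch
  have chinj : Function.Injective ch := by
    intro x y hxy
    apply Subtype.ext
    rw [← hch' x, ← hch' y, hxy]
  set F : Finset E := Finset.image ch Finset.univ with hF
  have hmem : ∀ x : s, ch x ∈ (F : Set E) := by intro x; simp [hF]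
  have hbij : Function.Bijective (fun x : s => (⟨ch x, hmem x⟩ : ↥(F : Set E))) := by
    constructor
    · intro x y h; exact chinj (congrArg Subtype.val h)
    · rintro ⟨f, hf⟩
      have hf' := hf
      simp only [hF, Finset.coe_image, Finset.coe_univ, Set.image_univ, Set.mem_range] at hf'
      obtain ⟨x, hx⟩ := hf'
      exact ⟨x, Subtype.ext hx⟩
  let eqv : s ≃ ↥(F : Set E) := Equiv.ofBijective _ hbij
  have hco : ∀ x : s, ((eqv x : ↥(F : Set E)) : E) = ch x := fun x => rfl
  have key : ∀ f : ↥(F : Set E), φ (f : E) = ((eqv.symm f : s) : Module.Dual K V) := by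
    intro f
    have h1 : ch (eqv.symm f) = (f : E) := by
      rw [← hco]; exact congrArg Subtype.val (eqv.apply_symm_apply f)
    rw [← h1, hch']
  have hfam : (fun f : ↥(F : Set E) => φ (f : E)) = Subtype.val ∘ eqv.symm := by
    funext f; exact key f
  have hind : LinearIndependent K (fun f : ↥(F : Set E) => φ (f : E)) := by
    rw [hfam]; exact hs_ind.comp eqv.symm eqv.symm.injective
  have hsp : Submodule.span K (Set.range (fun f : ↥(F : Set E) => φ (f : E))) = ⊤ := by
    rw [hfam, Set.range_comp, Set.range_eq_univ.2 eqv.symm.surjective, Set.image_univ,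
      Subtype.range_coe, hs_span]
  refine ⟨F, Basis.mk hind (le_of_eq hsp.symm), ?_, fun f => by rw [Basis.coe_mk]⟩
  · rw [hF, Finset.card_image_of_injective _ chinj, Finset.card_univ,
      ← Subspace.dual_finrank_eq (V := V), finrank_eq_card_basis hb]

end Aux

/-- For every configuration `W ⊆ K^E` there is `F ⊆ E` with
`|F| = dim (π_F W)^{⋆2} = dim W^{⋆2}` such that `ψ_W ≃ ψ_{π_F(W)}`; in particular `ψ_W`
is equivalent to a polynomial in at most `dim W^{⋆2} ≤ (dim W + 1 choose 2)` variables. -/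
theorem exists_small_contact_representative {K : Type*} [Field K] {E : Type*} [Fintype E]
    [DecidableEq E] {r : ℕ} (W : Submodule K (E → K)) (w : Fin r → E → K)
    (hw : LinearIndependent K w) (hspan : Submodule.span K (Set.range w) = W) :
    (∃ F : Finset E,
      F.card = Module.finrank K (hadPow (W.map (projF (F : Set E))) 2) ∧
      F.card = Module.finrank K (hadPow W 2) ∧
      ContactEquiv (configPoly w) (configPoly (fun i => projF (F : Set E) (w i)))) ∧
    Module.finrank K (hadPow W 2) ≤ Nat.choose (Module.finrank K W + 1) 2 := by
  classical
  constructor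
  · -- main part
    set V : Submodule K (E → K) := hadPow W 2 with hV
    obtain ⟨F, b, hcard, hbval⟩ := exists_good_finset V
    set A : E → ↥(F : Set E) → K :=
      fun e => (b.repr (LinearMap.proj e ∘ₗ V.subtype) : ↥(F : Set E) →₀ K) with hA
    have keyA : ∀ v ∈ V, ∀ e : E, v e = ∑ f : ↥(F : Set E), A e f * v (f : E) := by
      intro v hv e
      have h1 := b.sum_repr (LinearMap.proj e ∘ₗ V.subtype)
      have h2 := congrArg (fun ℓ : Module.Dual K V => ℓ ⟨v, hv⟩) h1
      simp only [LinearMap.coe_sum, Finset.sum_apply, LinearMap.smul_apply,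
        smul_eq_mul] at h2
      rw [show (LinearMap.proj e ∘ₗ V.subtype) ⟨v, hv⟩ = v e from rfl] at h2
      rw [← h2]
      refine Finset.sum_congr rfl fun f _ => ?_
      rw [hbval f]
      rfl
    have Adelta : ∀ f0 f : ↥(F : Set E), A (f0 : E) f = if f0 = f then 1 else 0 := by
      intro f0 f
      have h3 : (LinearMap.proj (f0 : E) ∘ₗ V.subtype) = b f0 := (hbval f0).symm
      rw [hA]
      simp only [h3, Basis.repr_self]
      rw [Finsupp.single_apply]
    have hmemV : ∀ i j, w i * w j ∈ V := by
      intro i j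
      rw [hV, hadPow_two_eq_mul]
      exact Submodule.mul_mem_mul (hspan ▸ Submodule.subset_span ⟨i, rfl⟩)
        (hspan ▸ Submodule.subset_span ⟨j, rfl⟩)
    refine ⟨F, ?_, ?_, ?_⟩
    · -- F.card = finrank of hadPow of projected space
      rw [hadPow_map, ← hV]
      have hrange : V.map (projF (F : Set E)) =
          LinearMap.range ((projF (F : Set E)) ∘ₗ V.subtype) := by
        rw [LinearMap.range_comp, Submodule.range_subtype]
      have hinj : Function.Injective ((projF (F : Set E)) ∘ₗ V.subtype) := by
        rw [← LinearMap.ker_eq_bot, eq_bot_iff]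
        intro x hx
        rw [LinearMap.mem_ker] at hx
        have hx0 : ∀ f : ↥(F : Set E), (x : E → K) (f : E) = 0 := fun f => congrFun hx f
        have hx1 : (x : E → K) = 0 := by
          funext e
          rw [keyA x x.2 e]
          simp [hx0]
        simpa [Submodule.mem_bot] using Subtype.ext hx1
      rw [hrange, LinearMap.finrank_range_of_inj hinj, hcard]
    · exact hcard
    · -- contact equivalence
      set p : ℕ := Fintype.card E with hp
      set fE : E ≃ Fin p := Fintype.equivFin E with hfE
      set M' : Matrix E E K := Matrix.of fun e e' =>
        if h : e ∈ (F : Set E) then A e' ⟨e, h⟩ else if e = e' then (1 : K) else 0 with hM'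
      set N : Matrix E E K := Matrix.of fun e e' =>
        if h : e ∈ (F : Set E) then (if e' ∈ (F : Set E) then 0 else A e' ⟨e, h⟩)
        else 0 with hN
      have hMN : M' = 1 + N := by
        ext e e'
        simp only [hM', hN, Matrix.of_apply, Matrix.add_apply, Matrix.one_apply]
        by_cases h : e ∈ (F : Set E)
        · rw [dif_pos h, dif_pos h]
          by_cases h' : e' ∈ (F : Set E)
          · rw [if_pos h', Adelta ⟨e', h'⟩ ⟨e, h⟩, add_zero]
            by_cases he : e = e'
            · subst he; rw [if_pos rfl, if_pos rfl]
            · rw [if_neg he, if_neg (fun hc => he (congrArg Subtype.val hc).symm)]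
          · rw [if_neg h']
            have hne : e ≠ e' := fun hc => h' (hc ▸ h)
            rw [if_neg hne, zero_add]
        · rw [dif_neg h, dif_neg h, add_zero]
      have hN2 : N * N = 0 := by
        ext e e''
        rw [Matrix.mul_apply, Matrix.zero_apply]
        refine Finset.sum_eq_zero fun e' _ => ?_
        by_cases h' : e' ∈ (F : Set E)
        · have hz : N e e' = 0 := by
            simp only [hN, Matrix.of_apply]
            split_ifs <;> simp_all
          rw [hz, zero_mul]
        · have hz : N e' e'' = 0 := by simp only [hN, Matrix.of_apply, dif_neg h']
          rw [hz, mul_zero]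
      have hright : M' * (1 - N) = 1 := by
        rw [hMN, mul_sub, mul_one, add_mul, one_mul, hN2, add_zero, add_sub_cancel_right]
      refine ⟨p, fE.toEmbedding, (Function.Embedding.subtype _).trans fE.toEmbedding,
        1, (M'.submatrix fE.symm fE.symm), ?_, ?_⟩
      · rw [Matrix.det_submatrix_equiv_self]
        exact Matrix.isUnit_det_of_right_inverse hright
      · rw [Units.val_one, one_smul]
        rw [configPoly, configPoly, AlgHom.map_det, AlgHom.map_det, AlgHom.map_det]
        congr 1
        refine Matrix.ext fun i j => ?_
        simp only [AlgHom.mapMatrix_apply, Matrix.map_apply, Matrix.of_apply, map_sum,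
          _root_.map_mul, rename_X, rename_C, aeval_X, aeval_C, algebraMap_eq,
          projF, LinearMap.funLeft_apply]
        simp only [← C_mul]
        symm
        have hentry : ∀ (f' : ↥(F : Set E)) (k : Fin p),
            (M'.submatrix fE.symm fE.symm) (((Function.Embedding.subtype _).trans
              fE.toEmbedding) f') k = A (fE.symm k) f' := by
          intro f' k
          have h1 : fE.symm (fE (f' : E)) = (f' : E) := fE.symm_apply_apply _
          simp only [Matrix.submatrix_apply, Function.Embedding.trans_apply,
            Function.Embedding.coe_subtype, Equiv.coe_toEmbedding, h1, hM', Matrix.of_apply]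
          rw [dif_pos f'.2]
        calc ∑ f' : ↥(F : Set E), (∑ k, C ((M'.submatrix fE.symm fE.symm)
                (((Function.Embedding.subtype _).trans fE.toEmbedding) f') k) * X k) *
                C (w i (f' : E) * w j (f' : E))
            = ∑ f' : ↥(F : Set E), (∑ e : E, C (A e f') * X (fE e)) *
                C (w i (f' : E) * w j (f' : E)) := by
              refine Finset.sum_congr rfl fun f' _ => ?_
              congr 1
              have hstep : ∀ k : Fin p, C ((M'.submatrix fE.symm fE.symm)
                  (((Function.Embedding.subtype _).trans fE.toEmbedding) f') k) * X k =
                  C (A (fE.symm k) f') * X k := fun k => by rw [hentry]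
              rw [Finset.sum_congr rfl fun k _ => hstep k,
                ← Equiv.sum_comp fE (fun k => C (A (fE.symm k) f') * X k)]
              exact Finset.sum_congr rfl fun e _ => by rw [fE.symm_apply_apply]
          _ = ∑ e : E, ∑ f' : ↥(F : Set E), (C (A e f') * X (fE e)) *
                C (w i (f' : E) * w j (f' : E)) := by
              rw [← Finset.sum_comm]
              exact Finset.sum_congr rfl fun f' _ => Finset.sum_mul _ _ _
          _ = ∑ e : E, X (fE e) * C (w i e * w j e) := by
              refine Finset.sum_congr rfl fun e _ => ?_
              have hterm : ∀ f' : ↥(F : Set E), (C (A e f') * X (fE e)) *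
                  C (w i (f' : E) * w j (f' : E)) =
                  X (fE e) * C (A e f' * (w i (f' : E) * w j (f' : E))) := by
                intro f'; rw [C_mul (a := A e f')]; ring
              rw [Finset.sum_congr rfl fun f' _ => hterm f', ← Finset.mul_sum, ← map_sum]
              congr 2
              have hk := keyA (w i * w j) (hmemV i j) e
              simp only [Pi.mul_apply] at hk
              exact hk.symm
  · -- the bound
    have hr : finrank K W = r := by
      rw [← hspan, finrank_span_eq_card hw, Fintype.card_fin]
    rw [hr, ← hspan]
    exact finrank_hadPow_two_le w
end

section
/- If W ⊆ K^E is a configuration whose second Hadamard power has dimension equal to dim W (i.e., r_W^2 = r_W = r), then ψ_W is linearly contact equivalent to the monomial x_1 x_2 ⋯ x_r. -/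
open MvPolynomial

section Aux
open Matrix

/-- Step A: a pivot (reduced row echelon form) basis for `W`. -/
lemma stepA_aux {K : Type*} [Field K] {E : Type*} [Fintype E] [DecidableEq E]
    {r : ℕ} (W : Submodule K (E → K)) (h1 : Module.finrank K W = r) :
    ∃ (s : Fin r → E) (u : Fin r → E → K), Function.Injective s ∧ (∀ i, u i ∈ W) ∧
      ∀ i j, u i (s j) = if i = j then 1 else 0 := by
  classical
  set φ : E → Module.Dual K W := fun e => (LinearMap.proj e).comp W.subtype with hφ
  have hspanφ : Submodule.span K (Set.range φ) = ⊤ := by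
    apply eq_top_iff.2
    rintro ξ -
    obtain ⟨Ξ, hΞ⟩ := LinearMap.dualMap_surjective_of_injective
      (f := W.subtype) W.injective_subtype ξ
    have : ξ = ∑ e, Ξ (fun j => if e = j then 1 else 0) • φ e := by
      ext v
      rw [← hΞ]
      have h2 := LinearMap.pi_apply_eq_sum_univ Ξ (v : E → K)
      simp only [LinearMap.dualMap_apply, LinearMap.sum_apply, LinearMap.smul_apply,
        smul_eq_mul, φ, LinearMap.comp_apply, LinearMap.proj_apply, Submodule.coe_subtype]
      rw [h2]
      exact Finset.sum_congr rfl fun e _ => by ring_nf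
    rw [this]
    exact Submodule.sum_mem _ fun e _ =>
      Submodule.smul_mem _ _ (Submodule.subset_span ⟨e, rfl⟩)
  obtain ⟨b, hbsub, hbspan, hbli⟩ := exists_linearIndependent K (Set.range φ)
  rw [hspanφ] at hbspan
  haveI : FiniteDimensional K W := inferInstance
  haveI : Fintype b := hbli.setFinite.fintype
  let B : Module.Basis b K (Module.Dual K W) := Module.Basis.mk hbli
    (by rw [Subtype.range_coe]; exact hbspan.ge)
  have hcard : Fintype.card b = r := by
    have := Module.finrank_eq_card_basis B
    rwa [Subspace.dual_finrank_eq, h1, eq_comm] at this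
  let ε : Fin r ≃ b := (Fintype.equivFinOfCardEq hcard).symm
  have hpre : ∀ i : Fin r, ∃ e : E, φ e = (ε i : Module.Dual K W) := fun i => hbsub (ε i).2
  choose s hs using hpre
  let B' : Module.Basis b K (Module.Dual K (Module.Dual K W)) := B.dualBasis
  let u : Fin r → W := fun i => (Module.evalEquiv K W).symm (B' (ε i))
  refine ⟨s, fun i => (u i : E → K), ?_, fun i => (u i).2, ?_⟩
  · intro i j hij
    have : (ε i : Module.Dual K W) = (ε j : Module.Dual K W) := by
      rw [← hs, ← hs, hij]
    exact ε.injective (Subtype.ext this)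
  · intro i j
    show ((u i : E → K)) (s j) = _
    have h1' : ((u i : E → K)) (s j) = φ (s j) (u i) := rfl
    rw [h1', hs]
    have h3 : (B (ε j)) (u i) = B' (ε i) (B (ε j)) := by
      simp [u, Module.apply_evalEquiv_symm_apply]
    rw [show ((ε j : b) : Module.Dual K W) = B (ε j) by simp [B, Module.Basis.mk_apply], h3]
    rw [Module.Basis.dualBasis_apply_self]
    simp [ε.apply_eq_iff_eq, eq_comm]

/-- Step B: the pivot basis has pairwise disjoint supports. -/
lemma stepB_aux {K : Type*} [Field K] {E : Type*} [Fintype E] [DecidableEq E]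
    {r : ℕ} (W : Submodule K (E → K)) (h2 : Module.finrank K (hadPow W 2) = r)
    (s : Fin r → E) (u : Fin r → E → K) (hu : ∀ i, u i ∈ W)
    (hus : ∀ i j, u i (s j) = if i = j then 1 else 0) :
    ∀ i j, i ≠ j → u i * u j = 0 := by
  classical
  have hmem : ∀ i j, u i * u j ∈ hadPow W 2 := by
    intro i j
    apply Submodule.subset_span
    exact ⟨![u i, u j], by
      intro k; fin_cases k <;> simp [hu], by rw [Fin.prod_univ_two]; simp⟩
  have hli : LinearIndependent K (fun i => u i * u i) := by
    rw [Fintype.linearIndependent_iff]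
    intro c hc m
    have := congrFun hc (s m)
    simpa [Pi.mul_apply, hus, Finset.sum_apply] using this
  have hsp : Submodule.span K (Set.range (fun i => u i * u i)) = hadPow W 2 := by
    apply Submodule.eq_of_le_of_finrank_le
    · rw [Submodule.span_le]; rintro v ⟨i, rfl⟩; exact hmem i i
    · rw [h2, finrank_span_eq_card hli, Fintype.card_fin]
  intro i j hij
  have : u i * u j ∈ Submodule.span K (Set.range (fun i => u i * u i)) := by
    rw [hsp]; exact hmem i j
  rw [Submodule.mem_span_range_iff_exists_fun] at this
  obtain ⟨c, hc⟩ := this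
  have hc0 : ∀ m, c m = 0 := by
    intro m
    have h4 := congrFun hc (s m)
    simp only [Finset.sum_apply, Pi.smul_apply, Pi.mul_apply, hus, smul_eq_mul] at h4
    rw [Finset.sum_eq_single m (fun b _ hb => by simp [if_neg hb]) (by simp)] at h4
    rcases eq_or_ne i m with rfl | him
    · simpa [if_neg (Ne.symm hij)] using h4
    · simpa [if_neg him] using h4
  rw [← hc]
  exact Finset.sum_eq_zero fun m _ => by rw [hc0 m, zero_smul]

/-- Step C: disjoint supports make the configuration polynomial a product of linear forms. -/
lemma stepC_aux {K : Type*} [Field K] {E : Type*} [Fintype E] [DecidableEq E]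
    {r : ℕ} (u : Fin r → E → K) (hdisj : ∀ i j, i ≠ j → u i * u j = 0) :
    configPoly u = ∏ i, ∑ e, MvPolynomial.X e * MvPolynomial.C (u i e * u i e) := by
  classical
  have h : (Matrix.of fun i j : Fin r => ∑ e, MvPolynomial.X e * MvPolynomial.C (u i e * u j e))
      = Matrix.diagonal (fun i => ∑ e, MvPolynomial.X e * MvPolynomial.C (u i e * u i e)) :=
    Matrix.ext fun i j => by
      rcases eq_or_ne i j with rfl | hij
      · simp
      · have h0 : ∀ e, u i e * u j e = 0 := fun e => congrFun (hdisj i j hij) e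
        rw [Matrix.of_apply, Matrix.diagonal_apply_ne _ hij]
        exact Finset.sum_eq_zero fun e _ => by rw [h0, map_zero, mul_zero]
  rw [configPoly, h, Matrix.det_diagonal]

/-- Step D: the effect of a change of basis on the configuration polynomial. -/
lemma stepD_aux {K : Type*} [Field K] {E : Type*} [Fintype E] [DecidableEq E]
    {r : ℕ} (w u : Fin r → E → K) (A : Matrix (Fin r) (Fin r) K)
    (hA : ∀ i, u i = ∑ k, A i k • w k) :
    configPoly u = MvPolynomial.C (A.det * A.det) * configPoly w := by
  classical
  have hue : ∀ i e, u i e = ∑ k, A i k * w k e := by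
    intro i e
    rw [hA i]
    simp [Finset.sum_apply]
  have key : (Matrix.of fun i j : Fin r => ∑ e, MvPolynomial.X e * MvPolynomial.C (u i e * u j e))
      = (A.map MvPolynomial.C) *
        (Matrix.of fun i j : Fin r => ∑ e, MvPolynomial.X e * MvPolynomial.C (w i e * w j e)) *
        (A.map MvPolynomial.C)ᵀ :=
    Matrix.ext fun i j => by
      simp only [Matrix.mul_apply, Matrix.transpose_apply, Matrix.map_apply, Matrix.of_apply, hue]
      calc
        ∑ e, (X e : MvPolynomial E K) * C ((∑ k, A i k * w k e) * (∑ l, A j l * w l e))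
            = ∑ e, ∑ k, ∑ l, (X e : MvPolynomial E K) *
                (C (A i k * w k e) * C (A j l * w l e)) := by
              refine Finset.sum_congr rfl fun e _ => ?_
              rw [Finset.sum_mul_sum, map_sum, Finset.mul_sum]
              refine Finset.sum_congr rfl fun k _ => ?_
              rw [map_sum, Finset.mul_sum]
              exact Finset.sum_congr rfl fun l _ => by rw [C_mul]
        _ = ∑ k, ∑ e, ∑ l, (X e : MvPolynomial E K) *
                (C (A i k * w k e) * C (A j l * w l e)) := Finset.sum_comm
        _ = ∑ k, ∑ l, ∑ e, (X e : MvPolynomial E K) *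
                (C (A i k * w k e) * C (A j l * w l e)) :=
              Finset.sum_congr rfl fun k _ => Finset.sum_comm
        _ = ∑ l, ∑ k, ∑ e, (X e : MvPolynomial E K) *
                (C (A i k * w k e) * C (A j l * w l e)) := Finset.sum_comm
        _ = ∑ l, (∑ k, C (A i k) *
                (∑ e, (X e : MvPolynomial E K) * C (w k e * w l e))) * C (A j l) := by
              refine Finset.sum_congr rfl fun l _ => ?_
              rw [Finset.sum_mul]
              refine Finset.sum_congr rfl fun k _ => ?_
              rw [Finset.mul_sum, Finset.sum_mul]
              refine Finset.sum_congr rfl fun e _ => ?_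
              rw [C_mul, C_mul, C_mul]
              ring
  rw [configPoly, key, Matrix.det_mul, Matrix.det_mul, Matrix.det_transpose]
  have hdet : (A.map MvPolynomial.C).det = MvPolynomial.C (σ := E) A.det := by
    rw [(MvPolynomial.C (σ := E)).map_det A]
    rfl
  rw [hdet, configPoly, C_mul]
  ring

end Aux

open Matrix

/-- If `dim W^{⋆2} = dim W = r`, then `ψ_W` is contact equivalent to `x_1 ⋯ x_r`. -/
theorem contact_equiv_monomial {K : Type*} [Field K] {E : Type*} [Fintype E] [DecidableEq E]
    {r : ℕ} (W : Submodule K (E → K)) (w : Fin r → E → K)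
    (hw : LinearIndependent K w) (hspan : Submodule.span K (Set.range w) = W)
    (h2 : Module.finrank K (hadPow W 2) = r) (h1 : Module.finrank K W = r) :
    ContactEquiv (configPoly w) (∏ i : Fin r, MvPolynomial.X i : MvPolynomial (Fin r) K) := by
  classical
  obtain ⟨s, u, hsinj, huW, hus⟩ := stepA_aux W h1
  have hdisj := stepB_aux W h2 s u huW hus
  -- change of basis matrix
  have hmem : ∀ i, u i ∈ Submodule.span K (Set.range w) := by rw [hspan]; exact huW
  have hexA : ∀ i, ∃ c : Fin r → K, ∑ k, c k • w k = u i := fun i =>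
    (Submodule.mem_span_range_iff_exists_fun K).mp (hmem i)
  choose A hA using hexA
  have hAu : ∀ i, u i = ∑ k, (Matrix.of A) i k • w k := fun i => (hA i).symm
  -- A is invertible
  have hAdet : (Matrix.of A).det ≠ 0 := by
    intro h0
    obtain ⟨c, hc0, hcA⟩ := Matrix.exists_vecMul_eq_zero_iff.mpr h0
    have hz : ∑ i, c i • u i = 0 := by
      have : ∑ i, c i • u i = ∑ k, (c ᵥ* (Matrix.of A)) k • w k := by
        simp_rw [hAu, Finset.smul_sum, smul_smul]
        rw [Finset.sum_comm]
        refine Finset.sum_congr rfl fun k _ => ?_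
        have hvm : (c ᵥ* (Matrix.of A)) k = ∑ i, c i * (Matrix.of A) i k := by
          simp [Matrix.vecMul, dotProduct]
        rw [hvm, Finset.sum_smul]
      rw [this, hcA]
      simp
    apply hc0
    funext m
    have := congrFun hz (s m)
    simp only [Finset.sum_apply, Pi.smul_apply, smul_eq_mul, hus, Pi.zero_apply] at this
    rw [Finset.sum_eq_single m (fun b _ hb => by simp [if_neg hb]) (by simp)] at this
    simpa using this
  -- set up the contact equivalence data
  set p := Fintype.card E with hp
  set f : E ≃ Fin p := Fintype.equivFin E with hf
  set T : Fin r → Fin p := fun i => f (s i) with hT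
  have hTinj : Function.Injective T := fun i j hij => hsinj (f.injective hij)
  set g : Fin r ↪ Fin p := ⟨T, hTinj⟩ with hg
  set M : Matrix (Fin p) (Fin p) K := Matrix.of fun j k =>
    if h : ∃ i, T i = j then u h.choose (f.symm k) * u h.choose (f.symm k)
    else if j = k then 1 else 0 with hM
  have hM1 : ∀ i k, M (T i) k = u i (f.symm k) * u i (f.symm k) := by
    intro i k
    have hex : ∃ i', T i' = T i := ⟨i, rfl⟩
    have hch : hex.choose = i := hTinj hex.choose_spec
    simp only [hM, Matrix.of_apply, dif_pos hex, hch]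
  have hM2 : ∀ j k, (¬ ∃ i, T i = j) → M j k = if j = k then 1 else 0 := by
    intro j k hj
    simp only [hM, Matrix.of_apply, dif_neg hj]
  have hsymmT : ∀ m, f.symm (T m) = s m := by
    intro m
    rw [hT]
    exact f.symm_apply_apply (s m)
  have hMcol : ∀ j m, M j (T m) = if j = T m then 1 else 0 := by
    intro j m
    by_cases hj : ∃ i, T i = j
    · obtain ⟨i, rfl⟩ := hj
      rw [hM1, hsymmT, hus]
      rcases eq_or_ne i m with rfl | him
      · simp
      · rw [if_neg him, if_neg (fun hc => him (hTinj hc)), mul_zero]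
    · exact hM2 _ _ hj
  have hMdet : M.det ≠ 0 := by
    intro h0
    obtain ⟨c, hc0, hcM⟩ := Matrix.exists_vecMul_eq_zero_iff.mpr h0
    have hcT : ∀ m, c (T m) = 0 := by
      intro m
      have := congrFun hcM (T m)
      have hvm : (c ᵥ* M) (T m) = ∑ j, c j * M j (T m) := by
        simp [Matrix.vecMul, dotProduct]
      rw [hvm] at this
      simp only [hMcol, Pi.zero_apply] at this
      rwa [Finset.sum_eq_single (T m) (fun b _ hb => by simp [if_neg hb]) (by simp),
        if_pos rfl, mul_one] at this
    apply hc0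
    funext k
    by_cases hk : ∃ m, T m = k
    · obtain ⟨m, rfl⟩ := hk; exact hcT m
    · have h6 : ∑ j, c j * M j k = 0 := by
        have hvm : (c ᵥ* M) k = ∑ j, c j * M j k := by
          simp [Matrix.vecMul, dotProduct]
        rw [← hvm]
        exact congrFun hcM k
      have h7 : ∑ j, c j * M j k = c k * M k k := by
        refine Finset.sum_eq_single k (fun b _ hb => ?_) (by simp)
        by_cases hbT : ∃ m, T m = b
        · obtain ⟨m, rfl⟩ := hbT
          rw [hcT m, zero_mul]
        · rw [hM2 b k hbT, if_neg hb, mul_zero]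
      rw [h7, hM2 k k hk, if_pos rfl, mul_one] at h6
      exact h6
  -- the scaling unit
  have hAdet2 : (Matrix.of A).det * (Matrix.of A).det ≠ 0 := mul_ne_zero hAdet hAdet
  set lam : Kˣ := (Units.mk0 _ hAdet2)⁻¹ with hlam
  refine ⟨p, f.toEmbedding, g, lam, M, isUnit_iff_ne_zero.mpr hMdet, ?_⟩
  -- configuration polynomials
  have hψu : configPoly u = MvPolynomial.C ((Matrix.of A).det * (Matrix.of A).det)
      * configPoly w := stepD_aux w u (Matrix.of A) hAu
  have hlin : ∀ i, (∑ j, MvPolynomial.C (M (T i) j) * MvPolynomial.X j)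
      = rename f.toEmbedding (∑ e, MvPolynomial.X e * MvPolynomial.C (u i e * u i e)) := by
    intro i
    rw [map_sum]
    rw [← Equiv.sum_comp f (fun j => MvPolynomial.C (M (T i) j) * MvPolynomial.X j)]
    refine Finset.sum_congr rfl fun e _ => ?_
    rw [hM1]
    have h8 : f.symm (f e) = e := f.symm_apply_apply e
    have h9 : (rename (f.toEmbedding : E ↪ Fin p))
        (MvPolynomial.X e * MvPolynomial.C (u i e * u i e))
        = MvPolynomial.X (f e) * MvPolynomial.C (u i e * u i e) := by
      simp [_root_.map_mul, rename_X, rename_C]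
    rw [h8, h9, mul_comm]
  -- compute the right-hand side
  have hrhs : (MvPolynomial.aeval
        (fun i => ∑ j, MvPolynomial.C (M i j) * MvPolynomial.X j)
        (MvPolynomial.rename g (∏ i : Fin r, MvPolynomial.X i : MvPolynomial (Fin r) K)))
      = rename f.toEmbedding (configPoly u) := by
    rw [map_prod, map_prod, stepC_aux u hdisj, map_prod]
    refine Finset.prod_congr rfl fun i _ => ?_
    rw [rename_X, aeval_X]
    exact hlin i
  rw [hrhs, hψu, _root_.map_mul, rename_C, MvPolynomial.smul_eq_C_mul, ← mul_assoc, ← C_mul]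
  have hone : (lam : K) * ((Matrix.of A).det * (Matrix.of A).det) = 1 := by
    rw [hlam]
    simp only [Units.val_inv_eq_inv_val, Units.val_mk0]
    exact inv_mul_cancel₀ hAdet2
  rw [hone, C_1, one_mul]
end
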